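/- A set S of incomparable pairs of a finite poset P is reversible (there is a single linear extension reversing every pair of S) if and only if S contains no alternating cycle. -/

import Mathlib

/-- `x` and `y` are incomparable elements of a poset. -/
def Incomp {α : Type*} [PartialOrder α] (x y : α) : Prop := ¬ x ≤ y ∧ ¬ y ≤ x

/-- `r` is a linear extension of the partial order on `α`. -/
def IsLinearExtension {α : Type*} [PartialOrder α] (r : α → α → Prop) : Prop :=
  IsLinearOrder α r ∧ ∀ x y : α, x ≤ y → r x y

/-- `α` admits a realizer consisting of `d` linear extensions. -/
def RealizerOfSize (α : Type*) [PartialOrder α] (d : ℕ) : Prop :=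
  ∃ L : Fin d → (α → α → Prop), (∀ i, IsLinearExtension (L i)) ∧
    ∀ x y : α, x ≤ y ↔ ∀ i, L i x y

/-- The Dushnik–Miller dimension: the least positive integer `d`
for which the order is the intersection of `d` linear extensions. -/
noncomputable def dimP (α : Type*) [PartialOrder α] : ℕ :=
  sInf {d | 0 < d ∧ RealizerOfSize α d}

/-- Alternating path from `x` to `y` using the listed pairs of `S` in order. -/
def OkChain {α : Type*} [PartialOrder α] (S : Set (α × α)) : α → α → List (α × α) → Prop
  | x, y, [] => x ≤ y
  | x, y, p :: L => x ≤ p.2 ∧ p ∈ S ∧ OkChain S p.1 y L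

namespace OkChain

variable {α : Type*} [PartialOrder α] {S : Set (α × α)}

lemma weaken {x x' y : α} {L : List (α × α)} (hx : x' ≤ x) (h : OkChain S x y L) :
    OkChain S x' y L := by
  cases L with
  | nil => exact le_trans hx h
  | cons p L => exact ⟨le_trans hx h.1, h.2.1, h.2.2⟩

lemma weaken' {x y y' : α} {L : List (α × α)} (hy : y ≤ y') (h : OkChain S x y L) :
    OkChain S x y' L := by
  induction L generalizing x with
  | nil => exact le_trans h hy
  | cons p L ih => exact ⟨h.1, h.2.1, ih h.2.2⟩

lemma append {x y z : α} {L M : List (α × α)} (h1 : OkChain S x y L) (h2 : OkChain S y z M) :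
    OkChain S x z (L ++ M) := by
  induction L generalizing x with
  | nil => exact h2.weaken h1
  | cons p L ih => exact ⟨h1.1, h1.2.1, ih h1.2.2⟩

lemma mem {x y : α} {L : List (α × α)} (h : OkChain S x y L) : ∀ p ∈ L, p ∈ S := by
  induction L generalizing x with
  | nil => simp
  | cons p L ih =>
    intro q hq
    rcases List.mem_cons.1 hq with rfl | hq
    · exact h.2.1
    · exact ih h.2.2 q hq

lemma head {x y : α} {p : α × α} {L : List (α × α)} (h : OkChain S x y (p :: L)) :
    x ≤ p.2 := h.1

lemma step {x y : α} {L : List (α × α)} (h : OkChain S x y L)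
    (i : ℕ) (hi : i + 1 < L.length) :
    (L.get ⟨i, by omega⟩).1 ≤ (L.get ⟨i + 1, hi⟩).2 := by
  induction L generalizing x i with
  | nil => simp at hi
  | cons p L ih =>
    cases i with
    | zero =>
      match L, hi, h with
      | q :: L, _, h => exact h.2.2.1
    | succ n => exact ih h.2.2 n (by simpa using hi)

lemma last {x y : α} {L : List (α × α)} (h : OkChain S x y L) (hL : L ≠ []) :
    (L.getLast hL).1 ≤ y := by
  induction L generalizing x with
  | nil => exact absurd rfl hL
  | cons p L ih =>
    cases L with
    | nil => exact h.2.2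
    | cons q L => simpa [List.getLast] using ih h.2.2 (by simp)

end OkChain

/-- A set `S` of incomparable pairs of a finite poset is reversible (there is a single
linear extension reversing every pair of `S`) if and only if `S` contains no
alternating cycle `(a₁,b₁),…,(a_k,b_k)` (with `k ≥ 2` and `aᵢ ≤ b_{i+1}` cyclically). -/
theorem stmt_11 (α : Type*) [PartialOrder α] [Fintype α]
    (S : Set (α × α)) (hS : ∀ p ∈ S, Incomp p.1 p.2) :
    (∃ r : α → α → Prop, IsLinearExtension r ∧ ∀ p ∈ S, r p.2 p.1) ↔
      ¬ ∃ (k : ℕ) (f : Fin (k + 2) → α × α),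
          (∀ i, f i ∈ S) ∧ ∀ i, (f i).1 ≤ (f (i + 1)).2 := by
  constructor
  · rintro ⟨r, ⟨hlin, hext⟩, hrev⟩ ⟨k, f, hfS, hfc⟩
    haveI := hlin
    have trans : ∀ {a b c : α}, r a b → r b c → r a c := fun h1 h2 => Trans.trans h1 h2
    have antisymm : ∀ {a b : α}, r a b → r b a → a = b := fun h1 h2 => _root_.antisymm h1 h2
    -- each step: r (f i).1 (f (i+1)).1
    have hstep : ∀ i : Fin (k + 2), r (f i).1 (f (i + 1)).1 := fun i =>
      trans (hext _ _ (hfc i)) (hrev _ (hfS (i + 1)))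
    open Fin.NatCast in
    have hchain : ∀ n : ℕ, r (f 0).1 (f (n : Fin (k + 2))).1 := by
      intro n
      induction n with
      | zero => exact hext _ _ (le_refl _)
      | succ n ih =>
        have : ((n + 1 : ℕ) : Fin (k + 2)) = (n : Fin (k + 2)) + 1 := by push_cast; ring
        rw [this]
        exact trans ih (hstep _)
    open Fin.NatCast in
    have hlast : r (f 0).1 (f (Fin.last (k + 1))).1 := by
      have := hchain (k + 1)
      rwa [show ((k + 1 : ℕ) : Fin (k + 2)) = Fin.last (k + 1) from Fin.natCast_eq_last (k + 1)]
        at this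
    have hwrap : Fin.last (k + 1) + 1 = (0 : Fin (k + 2)) := by
      ext; simp [Fin.last, Fin.add_def]
    have heq : (f 0).1 = (f (Fin.last (k + 1))).1 := by
      refine antisymm hlast ?_
      have := hstep (Fin.last (k + 1))
      rwa [hwrap] at this
    have h1 : r (f 0).1 (f 0).2 := by
      have := hext _ _ (hfc (Fin.last (k + 1)))
      rw [hwrap] at this
      rwa [heq]
    have h2 : r (f 0).2 (f 0).1 := hrev _ (hfS 0)
    have := antisymm h1 h2
    exact (hS _ (hfS 0)).1 (this ▸ le_refl _)
  · intro hnc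
    -- build the preorder generated by ≤ and reversed pairs
    set R : α → α → Prop := fun u v => u ≤ v ∨ (v, u) ∈ S with hR
    set T : α → α → Prop := Relation.ReflTransGen R with hT
    -- every T-path yields an OkChain
    have hTok : ∀ x y, T x y → ∃ L, OkChain S x y L := by
      intro x y h
      induction h using Relation.ReflTransGen.head_induction_on with
      | refl => exact ⟨[], le_refl _⟩
      | head hab _ ih =>
        obtain ⟨L, hL⟩ := ih
        rcases hab with hle | hmem
        · exact ⟨L, hL.weaken hle⟩
        · exact ⟨_ :: L, le_refl _, hmem, hL⟩
    -- no nonempty cyclic OkChain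
    have hnocyc : ∀ x (p : α × α) (L : List (α × α)), ¬ OkChain S x x (p :: L) := by
      intro x p L h
      apply hnc
      have hhead : x ≤ p.2 := h.head
      have hclose : ((p :: L).getLast (by simp)).1 ≤ p.2 :=
        le_trans (h.last (by simp)) hhead
      cases L with
      | nil =>
        exact ⟨0, fun _ => p, fun _ => h.2.1, fun _ => hclose⟩
      | cons q L' =>
        set k := L'.length with hk
        refine ⟨k, fun i => (p :: q :: L').get ⟨i.1, by have := i.isLt; have := hk; simp only [List.length_cons]; omega⟩,
          fun i => h.mem _ (List.get_mem _ _), ?_⟩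
        intro i
        rcases Nat.lt_or_ge (i.1 + 1) (k + 2) with hi | hi
        · have hval : ((i + 1 : Fin (k + 2)) : ℕ) = i.1 + 1 := by
            simp [Fin.add_def, Nat.mod_eq_of_lt hi]
          simp only [hval]
          exact h.step i.1 (by simp; omega)
        · have hi' : i.1 = k + 1 := by omega
          have hval : ((i + 1 : Fin (k + 2)) : ℕ) = 0 := by
            simp [Fin.add_def, hi']
          simp only [hval, hi']
          have hgl : (p :: q :: L').getLast (by simp) =
              (p :: q :: L').get ⟨k + 1, by simp [hk]⟩ := by
            rw [List.getLast_eq_getElem]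
            simp [hk]
          rw [hgl] at hclose
          exact hclose
    -- T is a partial order
    haveI : IsPartialOrder α T :=
      { refl := fun a => Relation.ReflTransGen.refl
        trans := fun a b c h1 h2 => Relation.ReflTransGen.trans h1 h2
        antisymm := by
          intro a b h1 h2
          obtain ⟨L1, hL1⟩ := hTok _ _ h1
          obtain ⟨L2, hL2⟩ := hTok _ _ h2
          have hcat := hL1.append hL2
          cases hcat' : (L1 ++ L2) with
          | nil =>
            rw [hcat'] at hcat
            obtain ⟨rfl, rfl⟩ : L1 = [] ∧ L2 = [] := by
              simpa using List.append_eq_nil_iff.1 hcat'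
            exact le_antisymm hL1 hL2
          | cons p L =>
            rw [hcat'] at hcat
            exact absurd hcat (hnocyc _ _ _) }
    obtain ⟨s, hs, hTs⟩ := extend_partialOrder T
    refine ⟨s, ⟨hs, fun x y hxy => hTs _ _ (Relation.ReflTransGen.single (Or.inl hxy))⟩,
      fun p hp => hTs _ _ (Relation.ReflTransGen.single (Or.inr ?_))⟩
    simpa using hp
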